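/- Let a, S, Z, q be rational numbers with Z ≠ 0, q ≠ 0, and q² = −Z²/6 − S/(6Z). Suppose X', Y' are rational numbers with Y' ≠ 0 satisfying Y'² = X'³ + (aZ/9 + (a/(9Z²))·S)·X'. Define U = 2q·X'/Y' and t = −q + U²·X'/(2q). Then t² = (a/(6Z))·U⁴ + q², and consequently (−Z+t)³ + (−Z−t)³ + Z³ + a·U⁴ = S. -/

import Mathlib

theorem elliptic_point_gives_solution (a S Z q X' Y' : ℚ) (hZ : Z ≠ 0) (hq : q ≠ 0)
    (hq2 : q ^ 2 = -Z ^ 2 / 6 - S / (6 * Z)) (hY : Y' ≠ 0)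
    (hcurve : Y' ^ 2 = X' ^ 3 + (a * Z / 9 + (a / (9 * Z ^ 2)) * S) * X') :
    let U := 2 * q * X' / Y'
    let t := -q + U ^ 2 * X' / (2 * q)
    t ^ 2 = (a / (6 * Z)) * U ^ 4 + q ^ 2 ∧
      (-Z + t) ^ 3 + (-Z - t) ^ 3 + Z ^ 3 + a * U ^ 4 = S := by
  intro U t
  have hq2' : 6 * Z * q ^ 2 = -Z ^ 3 - S := by
    field_simp at hq2; linear_combination hq2
  have hcurve' : 9 * Z ^ 2 * Y' ^ 2 = 9 * Z ^ 2 * X' ^ 3 + (a * Z ^ 3 + a * S) * X' := by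
    field_simp at hcurve; linear_combination hcurve
  have h3Z : (3 : ℚ) * Z ≠ 0 := mul_ne_zero (by norm_num) hZ
  have hC : 3 * Z * Y' ^ 2 = 3 * Z * X' ^ 3 - 2 * a * q ^ 2 * X' := by
    refine mul_left_cancel₀ h3Z ?_
    linear_combination hcurve' + a * X' * hq2'
  have h1 : t ^ 2 = (a / (6 * Z)) * U ^ 4 + q ^ 2 := by
    show (-q + (2 * q * X' / Y') ^ 2 * X' / (2 * q)) ^ 2 =
      (a / (6 * Z)) * (2 * q * X' / Y') ^ 4 + q ^ 2
    field_simp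
    linear_combination (-8 * X' ^ 3) * hC
  refine ⟨h1, ?_⟩
  have h2 : (-Z + t) ^ 3 + (-Z - t) ^ 3 + Z ^ 3 + a * U ^ 4
      = -Z ^ 3 - 6 * Z * t ^ 2 + a * U ^ 4 := by ring
  rw [h2, h1]
  have hd : a / (6 * Z) * (6 * Z) = a :=
    div_mul_cancel₀ a (mul_ne_zero (by norm_num) hZ)
  linear_combination (-1 : ℚ) * hq2' + (-U ^ 4) * hd
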